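/- Let (X,B,μ) be a probability space, f an ergodic measure-preserving automorphism, and φ ∈ L¹(X,μ) with ∫φ dμ = 0. Suppose that for μ-a.e. x, sup_{n≥0} S_f^n φ(x) = +∞ and inf_{n≥0} S_f^n φ(x) > -∞, where S_f^n φ denotes the Birkhoff sum over forward iterates. Then for μ-a.e. x, sup_{n≤0} S_f^n φ(x) = +∞ and inf_{n≤0} S_f^n φ(x) > -∞, where for n < 0, S_f^n φ(x) := -Σ_{j=1}^{-n} φ(f^{-j}(x)). -/

import Mathlib

open MeasureTheory Finset Filter
open scoped ENNReal

/-- The two-sided Birkhoff sum `S_f^n φ` of `φ` under the invertible map `f`: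
`S_f^n φ = ∑_{j=0}^{n-1} φ ∘ f^j` for `n ≥ 0`, and
`S_f^n φ = -∑_{j=1}^{-n} φ ∘ f^{-j}` for `n < 0`. -/
noncomputable def birkhoffZ {X : Type*} (f : X ≃ X) (φ : X → ℝ) (n : ℤ) (x : X) : ℝ :=
  if 0 ≤ n then ∑ j ∈ range n.toNat, φ ((⇑f)^[j] x)
  else -∑ j ∈ range (-n).toNat, φ ((⇑f.symm)^[j + 1] x)

section Aux

variable {X : Type*} [MeasurableSpace X] {μ : Measure X}

lemma ae_comp_of_measurePreserving {T : X → X} (hT : MeasurePreserving T μ μ)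
    {p : X → Prop} (hp : ∀ᵐ x ∂μ, p x) : ∀ᵐ x ∂μ, p (T x) :=
  hT.quasiMeasurePreserving.ae hp

lemma measurable_birkhoffSum' {T : X → X} (hT : Measurable T) {g : X → ℝ}
    (hg : Measurable g) (n : ℕ) : Measurable fun x => birkhoffSum T g n x := by
  unfold birkhoffSum
  exact Finset.measurable_sum _ fun i _ => hg.comp (hT.iterate i)

lemma le_toReal_of_ofReal_le {a : ℝ} {b : ℝ≥0∞} (hb : b ≠ ⊤) (h : ENNReal.ofReal a ≤ b) :
    a ≤ b.toReal := by
  rcases le_or_gt a 0 with h0 | h0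
  · exact h0.trans ENNReal.toReal_nonneg
  · have := ENNReal.toReal_mono hb h
    rwa [ENNReal.toReal_ofReal h0.le] at this

/-- If the Birkhoff sums of an integrable function are a.e. bounded above (uniformly in `n`),
then the integral of the function is nonpositive. -/
lemma integral_nonpos_of_birkhoff_bddAbove [IsProbabilityMeasure μ]
    {T : X → X} (hT : MeasurePreserving T μ μ)
    {h : X → ℝ} (hhm : Measurable h) (hhi : Integrable h μ)
    {C : X → ℝ} (hbd : ∀ᵐ x ∂μ, ∀ n : ℕ, birkhoffSum T h n x ≤ C x) :
    ∫ x, h x ∂μ ≤ 0 := by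
  set U : X → ℝ≥0∞ := fun x => ⨆ n : ℕ, ENNReal.ofReal (birkhoffSum T h n x) with hUdef
  have measU : Measurable U :=
    Measurable.iSup fun n => (measurable_birkhoffSum' hT.measurable hhm n).ennreal_ofReal
  set u : X → ℝ := fun x => (U x).toReal with hudef
  have measu : Measurable u := measU.ennreal_toReal
  have hu0 : ∀ x, 0 ≤ u x := fun x => ENNReal.toReal_nonneg
  have hfin : ∀ᵐ x ∂μ, U x ≠ ∞ := by
    filter_upwards [hbd] with x hx
    have : U x ≤ ENNReal.ofReal (max (C x) 0) :=
      iSup_le fun n => ENNReal.ofReal_le_ofReal ((hx n).trans (le_max_left _ _))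
    exact ne_top_of_le_ne_top ENNReal.ofReal_ne_top this
  have k1 : ∀ x, U x ≠ ∞ → ∀ n, birkhoffSum T h n x ≤ u x := fun x hx n =>
    le_toReal_of_ofReal_le hx (le_iSup (fun n => ENNReal.ofReal (birkhoffSum T h n x)) n)
  have k2 : ∀ x, U x ≠ ∞ → h x + u (T x) ≤ u x := by
    intro x hx
    have h1 : h x ≤ u x := by simpa [birkhoffSum_one] using k1 x hx 1
    have h2 : U (T x) ≤ ENNReal.ofReal (u x - h x) := by
      refine iSup_le fun m => ENNReal.ofReal_le_ofReal ?_
      have hm := k1 x hx (m + 1)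
      have hs := birkhoffSum_succ' T h m x
      linarith [hs ▸ hm]
    have h3 := ENNReal.toReal_mono ENNReal.ofReal_ne_top h2
    rw [ENNReal.toReal_ofReal (by linarith)] at h3
    linarith
  have key : ∀ m : ℕ, ∫ x, h x ∂μ ≤
      ∫ x, Set.indicator {y | (m : ℝ) < u y} (fun y => max (h y) 0) x ∂μ := by
    intro m
    have hsmeas : MeasurableSet {y | (m : ℝ) < u y} := measurableSet_lt measurable_const measu
    set uM : X → ℝ := fun x => min (u x) m with huMdef
    have measuM : Measurable uM := measu.min measurable_const
    have huM0 : ∀ x, 0 ≤ uM x := fun x => le_min (hu0 x) (Nat.cast_nonneg m)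
    have huMle : ∀ x, uM x ≤ m := fun x => min_le_right _ _
    have hintuM : Integrable uM μ := by
      refine (integrable_const ((m : ℝ))).mono' measuM.aestronglyMeasurable ?_
      exact ae_of_all _ fun x => by
        rw [Real.norm_eq_abs, abs_of_nonneg (huM0 x)]; exact huMle x
    have hintuMT : Integrable (fun x => uM (T x)) μ :=
      (hT.integrable_comp measuM.aestronglyMeasurable).2 hintuM
    have hind : Integrable (Set.indicator {y | (m : ℝ) < u y} fun y => max (h y) 0) μ :=
      hhi.pos_part.indicator hsmeas
    have hpt : ∀ᵐ x ∂μ,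
        h x - Set.indicator {y | (m : ℝ) < u y} (fun y => max (h y) 0) x ≤ uM x - uM (T x) := by
      filter_upwards [hfin] with x hx
      rcases le_or_gt (u x) m with hc | hc
      · have hind0 : Set.indicator {y | (m : ℝ) < u y} (fun y => max (h y) 0) x = 0 :=
          Set.indicator_of_notMem (by simpa using not_lt.2 hc) _
        have he : uM x = u x := min_eq_left hc
        have h2 := k2 x hx
        have h3 : uM (T x) ≤ u (T x) := min_le_left _ _
        rw [hind0, he]
        linarith
      · have hindeq : Set.indicator {y | (m : ℝ) < u y} (fun y => max (h y) 0) x = max (h x) 0 :=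
          Set.indicator_of_mem (by simpa using hc) _
        have he : uM x = m := min_eq_right hc.le
        have h3 := huMle (T x)
        rw [hindeq, he]
        have := le_max_left (h x) 0
        linarith
    have hcomp : ∫ x, uM x ∂μ = ∫ x, uM (T x) ∂μ := by
      conv_lhs => rw [← hT.map_eq]
      exact integral_map hT.measurable.aemeasurable
        (by rw [hT.map_eq]; exact measuM.aestronglyMeasurable)
    have hmono := integral_mono_ae
      (f := fun x => h x - Set.indicator {y | (m : ℝ) < u y} (fun y => max (h y) 0) x)
      (g := fun x => uM x - uM (T x)) (hhi.sub hind) (hintuM.sub hintuMT) hpt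
    rw [integral_sub hhi hind, integral_sub hintuM hintuMT] at hmono
    linarith [hcomp]
  have hDCT : Tendsto
      (fun m : ℕ => ∫ x, Set.indicator {y | (m : ℝ) < u y} (fun y => max (h y) 0) x ∂μ)
      atTop (nhds 0) := by
    have hlim : ∀ x : X, Tendsto
        (fun m : ℕ => Set.indicator {y | (m : ℝ) < u y} (fun y => max (h y) 0) x)
        atTop (nhds 0) := by
      intro x
      obtain ⟨N, hN⟩ := exists_nat_gt (u x)
      refine tendsto_const_nhds.congr' ?_
      filter_upwards [eventually_ge_atTop N] with m hm
      have hnot : x ∉ {y | (m : ℝ) < u y} := by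
        simp only [Set.mem_setOf_eq, not_lt]
        exact hN.le.trans (by exact_mod_cast hm)
      exact (Set.indicator_of_notMem hnot _).symm
    have hbnd : ∀ m : ℕ, ∀ᵐ x ∂μ,
        ‖Set.indicator {y | (m : ℝ) < u y} (fun y => max (h y) 0) x‖ ≤ max (h x) 0 := by
      intro m
      refine ae_of_all _ fun x => ?_
      rw [Real.norm_eq_abs]
      by_cases hx : x ∈ {y | (m : ℝ) < u y}
      · rw [Set.indicator_of_mem hx, abs_of_nonneg (le_max_right _ _)]
      · rw [Set.indicator_of_notMem hx, abs_zero]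
        exact le_max_right _ _
    have := tendsto_integral_of_dominated_convergence (μ := μ)
      (F := fun (m : ℕ) x => Set.indicator {y | (m : ℝ) < u y} (fun y => max (h y) 0) x)
      (f := fun _ => (0 : ℝ)) (bound := fun y => max (h y) 0)
      (fun m => ((hhm.max measurable_const).indicator
        (measurableSet_lt measurable_const measu)).aestronglyMeasurable)
      hhi.pos_part hbnd (ae_of_all _ hlim)
    simpa using this
  exact ge_of_tendsto' hDCT key

lemma Ergodic.symm_of_measurableEquiv (f : X ≃ᵐ X) (hf : Ergodic (⇑f) μ) :
    Ergodic (⇑f.symm) μ := by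
  refine ⟨MeasurePreserving.symm f hf.toMeasurePreserving, ⟨fun s hs hinv => ?_⟩⟩
  have h1 : ⇑f ⁻¹' s = ⇑f ⁻¹' (⇑f.symm ⁻¹' s) := by rw [hinv]
  have h2 : ⇑f ⁻¹' s = s := by
    rw [h1]; ext x; simp
  exact hf.toPreErgodic.aeconst_set hs h2

end Aux

/-- **Ergodic deviation theorem.** If `f` is an ergodic automorphism of a probability space
and `φ ∈ L¹` has zero mean, and if for a.e. `x` the forward Birkhoff sums are unbounded
from above but bounded from below, then for a.e. `x` the backward Birkhoff sums are also
unbounded from above and bounded from below. -/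
theorem ergodic_deviations_backward
    {X : Type*} [MeasurableSpace X] (μ : Measure X) [IsProbabilityMeasure μ]
    (f : X ≃ᵐ X) (hf : Ergodic (⇑f) μ)
    (φ : X → ℝ) (hφ : Integrable φ μ) (hmean : ∫ x, φ x ∂μ = 0)
    (hforward : ∀ᵐ x ∂μ,
      (∀ M : ℝ, ∃ n : ℤ, 0 ≤ n ∧ M < birkhoffZ f.toEquiv φ n x) ∧
      (∃ K : ℝ, ∀ n : ℤ, 0 ≤ n → -K < birkhoffZ f.toEquiv φ n x)) :
    ∀ᵐ x ∂μ,
      (∀ M : ℝ, ∃ n : ℤ, n ≤ 0 ∧ M < birkhoffZ f.toEquiv φ n x) ∧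
      (∃ K : ℝ, ∀ n : ℤ, n ≤ 0 → -K < birkhoffZ f.toEquiv φ n x) := by
  have hT : MeasurePreserving (⇑f) μ μ := hf.toMeasurePreserving
  have hTi : MeasurePreserving (⇑f.symm) μ μ := MeasurePreserving.symm f hT
  -- measurable version of φ
  set φ₀ : X → ℝ := hφ.1.mk φ with hφ₀def
  have hφ₀m : Measurable φ₀ := hφ.1.stronglyMeasurable_mk.measurable
  have hφeq : φ =ᵐ[μ] φ₀ := hφ.1.ae_eq_mk
  have hφ₀i : Integrable φ₀ μ := hφ.congr hφeq
  have hmean₀ : ∫ x, φ₀ x ∂μ = 0 := by rw [← integral_congr_ae hφeq]; exact hmean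
  have measS : ∀ n : ℕ, Measurable (fun x => birkhoffSum (⇑f) φ₀ n x) := fun n =>
    measurable_birkhoffSum' f.measurable hφ₀m n
  set Ψ : X → ℝ≥0∞ := fun x => ⨆ n : ℕ, ENNReal.ofReal (-(birkhoffSum (⇑f) φ₀ n x)) with hΨdef
  have measΨ : Measurable Ψ := Measurable.iSup fun n => ((measS n).neg).ennreal_ofReal
  set ψ : X → ℝ := fun x => (Ψ x).toReal with hψdef
  have measψ : Measurable ψ := measΨ.ennreal_toReal
  have hψ0 : ∀ x, 0 ≤ ψ x := fun x => ENNReal.toReal_nonneg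
  -- φ agrees with its measurable version along forward orbits, a.e.
  have horbF : ∀ᵐ x ∂μ, ∀ n : ℕ, φ ((⇑f)^[n] x) = φ₀ ((⇑f)^[n] x) := by
    rw [ae_all_iff]; intro n
    exact ae_comp_of_measurePreserving (hT.iterate n) hφeq
  -- `birkhoffZ` at nonnegative indices is `birkhoffSum` of `φ₀`
  have hbz : ∀ (x : X) (n : ℕ), (∀ j : ℕ, φ ((⇑f)^[j] x) = φ₀ ((⇑f)^[j] x)) →
      birkhoffZ f.toEquiv φ ((n : ℤ)) x = birkhoffSum (⇑f) φ₀ n x := by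
    intro x n hx
    simp only [birkhoffZ, if_pos (Int.natCast_nonneg n), Int.toNat_natCast,
      MeasurableEquiv.coe_toEquiv, birkhoffSum]
    exact Finset.sum_congr rfl fun j _ => hx j
  -- a.e. forward unboundedness and boundedness below, for `φ₀`
  have hP : ∀ᵐ x ∂μ, (∀ M : ℝ, ∃ n : ℕ, M < birkhoffSum (⇑f) φ₀ n x) ∧ Ψ x ≠ ∞ := by
    filter_upwards [hforward, horbF] with x hfw horb
    constructor
    · intro M
      obtain ⟨n, hn0, hn⟩ := hfw.1 M
      refine ⟨n.toNat, ?_⟩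
      have he : ((n.toNat : ℕ) : ℤ) = n := Int.toNat_of_nonneg hn0
      rw [← hbz x n.toNat horb, he]
      exact hn
    · obtain ⟨K, hK⟩ := hfw.2
      have hle : Ψ x ≤ ENNReal.ofReal K := by
        refine iSup_le fun n => ENNReal.ofReal_le_ofReal ?_
        have := hK (n : ℤ) (Int.natCast_nonneg n)
        rw [hbz x n horb] at this
        linarith
      exact ne_top_of_le_ne_top ENNReal.ofReal_ne_top hle
  have l1 : ∀ x, Ψ x ≠ ∞ → ∀ n : ℕ, -(birkhoffSum (⇑f) φ₀ n x) ≤ ψ x := fun x hx n =>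
    le_toReal_of_ofReal_le hx (le_iSup (fun n => ENNReal.ofReal (-(birkhoffSum (⇑f) φ₀ n x))) n)
  set d : X → ℝ := fun x => φ₀ x + ψ x - ψ (f x) with hddef
  have measd : Measurable d := (hφ₀m.add measψ).sub (measψ.comp f.measurable)
  have l2 : ∀ x, Ψ x ≠ ∞ → 0 ≤ d x := by
    intro x hx
    have h1 : -(φ₀ x) ≤ ψ x := by simpa [birkhoffSum_one] using l1 x hx 1
    have h2 : Ψ (f x) ≤ ENNReal.ofReal (φ₀ x + ψ x) := by
      refine iSup_le fun m => ENNReal.ofReal_le_ofReal ?_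
      have hm := l1 x hx (m + 1)
      have hs := birkhoffSum_succ' (⇑f) φ₀ m x
      linarith
    have h3 := ENNReal.toReal_mono ENNReal.ofReal_ne_top h2
    rw [ENNReal.toReal_ofReal (by linarith)] at h3
    show (0:ℝ) ≤ φ₀ x + ψ x - ψ (f x)
    linarith
  -- telescoping identity
  have tele : ∀ (x : X) (n : ℕ),
      birkhoffSum (⇑f) d n x = birkhoffSum (⇑f) φ₀ n x + ψ x - ψ ((⇑f)^[n] x) := by
    intro x n
    induction n with
    | zero => simp
    | succ n ih =>
      rw [birkhoffSum_succ, birkhoffSum_succ, ih, Function.iterate_succ_apply']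
      show birkhoffSum (⇑f) φ₀ n x + ψ x - ψ ((⇑f)^[n] x)
          + (φ₀ ((⇑f)^[n] x) + ψ ((⇑f)^[n] x) - ψ (f ((⇑f)^[n] x)))
        = birkhoffSum (⇑f) φ₀ n x + φ₀ ((⇑f)^[n] x) + ψ x - ψ (f ((⇑f)^[n] x))
      ring
  set g : X → ℝ := fun x => min (max (d x) 0) 1 with hgdef
  have measg : Measurable g := (measd.max measurable_const).min measurable_const
  have hg0 : ∀ x, 0 ≤ g x := fun x => le_min (le_max_right _ _) zero_le_one
  have hgle : ∀ x, 0 ≤ d x → g x ≤ d x := fun x hd =>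
    (min_le_left _ _).trans (le_of_eq (max_eq_left hd))
  have hgi : Integrable g μ := by
    refine (integrable_const (1 : ℝ)).mono' measg.aestronglyMeasurable ?_
    refine ae_of_all _ fun x => ?_
    rw [Real.norm_eq_abs, abs_of_nonneg (hg0 x)]
    exact min_le_right _ _
  have hallfin : ∀ᵐ x ∂μ, ∀ j : ℕ, Ψ ((⇑f)^[j] x) ≠ ∞ := by
    rw [ae_all_iff]; intro j
    exact ae_comp_of_measurePreserving (hT.iterate j) (hP.mono fun x hx => hx.2)
  have hSh : ∀ᵐ x ∂μ, ∀ n : ℕ, birkhoffSum (⇑f) (fun y => g y - φ₀ y) n x ≤ ψ x := by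
    filter_upwards [hallfin] with x hx
    intro n
    have e1 : birkhoffSum (⇑f) (fun y => g y - φ₀ y) n x
        = birkhoffSum (⇑f) g n x - birkhoffSum (⇑f) φ₀ n x := by
      unfold birkhoffSum
      rw [Finset.sum_sub_distrib]
    have e2 : birkhoffSum (⇑f) g n x ≤ birkhoffSum (⇑f) d n x := by
      unfold birkhoffSum
      exact Finset.sum_le_sum fun j _ => hgle _ (l2 _ (hx j))
    have e3 := tele x n
    have e4 := hψ0 ((⇑f)^[n] x)
    rw [e1]
    linarith
  have hIg : ∫ x, g x ∂μ ≤ 0 := by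
    have hmain := integral_nonpos_of_birkhoff_bddAbove hT (measg.sub hφ₀m)
      (hgi.sub hφ₀i) hSh
    simp only [Pi.sub_apply] at hmain
    rw [integral_sub hgi hφ₀i, hmean₀] at hmain
    linarith
  have hgzero : g =ᵐ[μ] 0 := by
    have h0 : ∫ x, g x ∂μ = 0 := le_antisymm hIg (integral_nonneg hg0)
    exact (integral_eq_zero_iff_of_nonneg hg0 hgi).mp h0
  have hdzero : ∀ᵐ x ∂μ, d x = 0 := by
    filter_upwards [hgzero, hP] with x hgx hx
    have hd0 := l2 x hx.2
    by_contra hne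
    have hlt : 0 < d x := lt_of_le_of_ne hd0 (Ne.symm hne)
    have hpos : (0:ℝ) < g x := by
      show (0:ℝ) < min (max (d x) 0) 1
      exact lt_min (lt_max_iff.mpr (Or.inl hlt)) one_pos
    simp only [Pi.zero_apply] at hgx
    linarith
  have hunb : ∀ᵐ x ∂μ, ∀ M : ℝ, ∃ n : ℕ, M < birkhoffSum (⇑f) φ₀ n x :=
    hP.mono fun x hx => hx.1
  have hRae : ∀ᵐ x ∂μ, d x = 0 ∧ φ x = φ₀ x := hdzero.and hφeq
  have hgood : ∀ᵐ x ∂μ, ∀ n : ℕ,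
      (d ((⇑f)^[n] x) = 0 ∧ φ ((⇑f)^[n] x) = φ₀ ((⇑f)^[n] x)) ∧
      (d ((⇑f.symm)^[n] x) = 0 ∧ φ ((⇑f.symm)^[n] x) = φ₀ ((⇑f.symm)^[n] x)) := by
    rw [ae_all_iff]; intro n
    exact (ae_comp_of_measurePreserving (hT.iterate n) hRae).and
      (ae_comp_of_measurePreserving (hTi.iterate n) hRae)
  -- forward identity
  have Id1 : ∀ x : X, (∀ n : ℕ, d ((⇑f)^[n] x) = 0) →
      ∀ n : ℕ, birkhoffSum (⇑f) φ₀ n x = ψ ((⇑f)^[n] x) - ψ x := by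
    intro x hx n
    induction n with
    | zero => simp
    | succ n ih =>
      have hd : φ₀ ((⇑f)^[n] x) + ψ ((⇑f)^[n] x) - ψ (f ((⇑f)^[n] x)) = 0 := hx n
      rw [birkhoffSum_succ, ih, Function.iterate_succ_apply']
      linarith
  -- backward identity
  have Id2 : ∀ x : X, (∀ n : ℕ, d ((⇑f.symm)^[n] x) = 0) →
      ∀ m : ℕ, (∑ j ∈ range m, φ₀ ((⇑f.symm)^[j+1] x)) = ψ x - ψ ((⇑f.symm)^[m] x) := by
    intro x hx m
    induction m with
    | zero => simp
    | succ m ih =>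
      have hd : φ₀ ((⇑f.symm)^[m+1] x) + ψ ((⇑f.symm)^[m+1] x)
          - ψ (f ((⇑f.symm)^[m+1] x)) = 0 := hx (m+1)
      have hfix : f ((⇑f.symm)^[m+1] x) = (⇑f.symm)^[m] x := by
        rw [Function.iterate_succ_apply']
        exact f.apply_symm_apply _
      rw [hfix] at hd
      rw [Finset.sum_range_succ, ih]
      linarith
  have Id3 : ∀ x : X,
      (∀ n : ℕ, d ((⇑f.symm)^[n] x) = 0 ∧ φ ((⇑f.symm)^[n] x) = φ₀ ((⇑f.symm)^[n] x)) →
      ∀ m : ℕ, birkhoffZ f.toEquiv φ (-(m : ℤ)) x = ψ ((⇑f.symm)^[m] x) - ψ x := by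
    intro x hx m
    have hdx : ∀ n : ℕ, d ((⇑f.symm)^[n] x) = 0 := fun n => (hx n).1
    match m with
    | 0 => simp [birkhoffZ]
    | (k+1) =>
      have hneg : ¬ (0 ≤ -(((k+1 : ℕ)) : ℤ)) := by omega
      simp only [birkhoffZ, if_neg hneg, neg_neg, Int.toNat_natCast,
        MeasurableEquiv.coe_toEquiv_symm]
      rw [show (∑ j ∈ range (k+1), φ ((⇑f.symm)^[j+1] x))
          = ∑ j ∈ range (k+1), φ₀ ((⇑f.symm)^[j+1] x) from
        Finset.sum_congr rfl fun j _ => (hx (j+1)).2]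
      rw [Id2 x hdx (k+1)]
      ring
  -- Step A: ψ is a.e. unbounded (in measure)
  have stepA : ∀ C : ℝ, μ {x | C < ψ x} ≠ 0 := by
    intro C hC0
    have hle : ∀ᵐ x ∂μ, ¬ (C < ψ x) := by
      rw [ae_iff]
      simpa using hC0
    have hiter : ∀ᵐ x ∂μ, ∀ n : ℕ, ¬ (C < ψ ((⇑f)^[n] x)) := by
      rw [ae_all_iff]; intro n
      exact ae_comp_of_measurePreserving (hT.iterate n) hle
    have hfalse : ∀ᵐ _x ∂μ, False := by
      filter_upwards [hiter, hunb, hgood] with x h1 h2 h3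
      obtain ⟨n, hn⟩ := h2 C
      have hid := Id1 x (fun j => (h3 j).1.1) n
      rw [hid] at hn
      have h4 := hψ0 x
      have h5 := not_lt.mp (h1 n)
      linarith
    have hμ : μ ≠ 0 := by
      intro h0
      have huniv := measure_univ (μ := μ)
      rw [h0] at huniv
      simp at huniv
    haveI : (ae μ).NeBot := ae_neBot.2 hμ
    obtain ⟨x, hx⟩ := hfalse.exists
    exact hx
  -- Step B: a.e. point sees large values of ψ along the backward orbit
  have hergs : Ergodic (⇑f.symm) μ := Ergodic.symm_of_measurableEquiv f hf
  have hback : ∀ᵐ x ∂μ, ∀ C : ℕ, ∃ m : ℕ, (C : ℝ) < ψ ((⇑f.symm)^[m] x) := by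
    rw [ae_all_iff]
    intro C
    have hA : MeasurableSet {x | (C : ℝ) < ψ x} := measurableSet_lt measurable_const measψ
    have hApos : μ {x | (C : ℝ) < ψ x} ≠ 0 := stepA C
    set B : Set X := ⋃ m : ℕ, ((⇑f.symm)^[m]) ⁻¹' {x | (C : ℝ) < ψ x} with hBdef
    have hB : MeasurableSet B :=
      MeasurableSet.iUnion fun m => hA.preimage (f.symm.measurable.iterate m)
    have hsub : ⇑f.symm ⁻¹' B ⊆ B := by
      intro x hx
      simp only [hBdef, Set.mem_preimage, Set.mem_iUnion] at hx ⊢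
      obtain ⟨m, hm⟩ := hx
      exact ⟨m + 1, by rwa [Function.iterate_succ_apply]⟩
    rcases hergs.ae_empty_or_univ_of_preimage_ae_le' hB.nullMeasurableSet
        hsub.eventuallyLE (measure_ne_top μ B) with hemp | huniv
    · exfalso
      apply hApos
      have hAB : {x | (C : ℝ) < ψ x} ⊆ B := fun x hx => Set.mem_iUnion.2 ⟨0, hx⟩
      exact measure_mono_null hAB (ae_eq_empty.mp hemp)
    · have hmem : ∀ᵐ x ∂μ, x ∈ B := by
        rw [Filter.eventually_iff, mem_ae_iff]
        simpa using ae_eq_univ.mp huniv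
      refine hmem.mono fun x hx => ?_
      simpa only [hBdef, Set.mem_iUnion, Set.mem_preimage, Set.mem_setOf_eq] using hx
  -- conclusion
  filter_upwards [hgood, hback] with x hx hbx
  have hid3 := Id3 x (fun n => (hx n).2)
  constructor
  · intro M
    obtain ⟨c, hc⟩ := exists_nat_gt (M + ψ x)
    obtain ⟨m, hm⟩ := hbx c
    exact ⟨-(m : ℤ), neg_nonpos.mpr (Int.natCast_nonneg m), by rw [hid3 m]; linarith⟩
  · refine ⟨ψ x + 1, fun n hn => ?_⟩
    have hm : n = -(((-n).toNat : ℕ) : ℤ) := by omega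
    rw [hm, hid3 (-n).toNat]
    have h1 := hψ0 ((⇑f.symm)^[(-n).toNat] x)
    have h2 := hψ0 x
    linarith
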